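/- The matrix C(k,m,ρ,σ) is positive semidefinite; hence it is the covariance matrix of a centered multivariate Gaussian on ℝ^{k^m}. (This is the existence half of the theorem on conditional independent Gaussian trees: the k^m leaves of the regular (k,m) conditional independent Gaussian tree are jointly normal with covariance matrix C(k,m,ρ,σ).) -/

import Mathlib

open MeasureTheory ProbabilityTheory
open scoped Classical

noncomputable def lcaHeight (k i j : ℕ) : ℕ := sInf {l | 1 ≤ l ∧ i / k ^ l = j / k ^ l}

noncomputable def treeCov (k m : ℕ) (ρ σ : ℝ) : Matrix (Fin (k ^ m)) (Fin (k ^ m)) ℝ :=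
  Matrix.of fun i j =>
    if (i : ℕ) = (j : ℕ) then σ ^ 2
    else σ ^ 2 * ρ * (1 / (k : ℝ) + (1 - 1 / (k : ℝ)) * ρ) ^ (lcaHeight k i j - 1)

noncomputable def blockSumSq (k m : ℕ) (x : Fin (k ^ m) → ℝ) (p : ℕ) : ℝ :=
  ∑ r ∈ Finset.range (k ^ p),
    (∑ i ∈ Finset.univ.filter (fun i : Fin (k ^ m) => (i : ℕ) / k ^ (m - p) = r), x i) ^ 2

lemma lca_upward {k i j l t : ℕ} (hlt : l ≤ t) (h : i / k ^ l = j / k ^ l) :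
    i / k ^ t = j / k ^ t := by
  have hi : ∀ a : ℕ, a / k ^ t = a / k ^ l / k ^ (t - l) := fun a => by
    rw [Nat.div_div_eq_div_mul, ← pow_add, Nat.add_sub_cancel' hlt]
  rw [hi i, hi j, h]

lemma lcaHeight_key {k m i j : ℕ} (hm : 1 ≤ m) (hi : i < k ^ m) (hj : j < k ^ m)
    (hij : i ≠ j) :
    1 ≤ lcaHeight k i j ∧ lcaHeight k i j ≤ m ∧
      ∀ t, i / k ^ t = j / k ^ t ↔ lcaHeight k i j ≤ t := by
  have hmem : m ∈ {l | 1 ≤ l ∧ i / k ^ l = j / k ^ l} :=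
    ⟨hm, by rw [Nat.div_eq_of_lt hi, Nat.div_eq_of_lt hj]⟩
  have hLmem : lcaHeight k i j ∈ {l | 1 ≤ l ∧ i / k ^ l = j / k ^ l} := Nat.sInf_mem ⟨m, hmem⟩
  refine ⟨hLmem.1, Nat.sInf_le hmem, fun t => ⟨fun ht => ?_, fun ht => lca_upward ht hLmem.2⟩⟩
  rcases Nat.eq_zero_or_pos t with rfl | htpos
  · exact absurd (by simpa using ht) hij
  · exact Nat.sInf_le ⟨htpos, ht⟩

lemma treeCov_quadform (k m : ℕ) (hk : 2 ≤ k) (hm : 1 ≤ m) (σ ρ : ℝ) (x : Fin (k ^ m) → ℝ)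
    (hbs : ∀ p, p ≤ m → blockSumSq k m x p
      = ∑ i : Fin (k ^ m), ∑ j : Fin (k ^ m),
          (if (i : ℕ) / k ^ (m - p) = (j : ℕ) / k ^ (m - p) then x i * x j else 0)) :
    dotProduct x (Matrix.mulVec (treeCov k m ρ σ) x) =
      σ ^ 2 * (blockSumSq k m x m + ρ * ∑ t ∈ Finset.range m,
        (1 / (k : ℝ) + (1 - 1 / (k : ℝ)) * ρ) ^ t *
          (blockSumSq k m x (m - (t + 1)) - blockSumSq k m x (m - t))) := by
  set q : ℝ := 1 / (k : ℝ) + (1 - 1 / (k : ℝ)) * ρ with hqdef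
  set d : ℕ → Fin (k ^ m) → Fin (k ^ m) → ℝ := fun u i j =>
    if (i : ℕ) / k ^ u = (j : ℕ) / k ^ u then x i * x j else 0 with hd
  have hD : ∀ p, p ≤ m → blockSumSq k m x p
      = ∑ i : Fin (k ^ m), ∑ j : Fin (k ^ m), d (m - p) i j := fun p hp => hbs p hp
  -- rewrite the three kinds of block sums
  have h0 : blockSumSq k m x m = ∑ i : Fin (k ^ m), ∑ j : Fin (k ^ m), d 0 i j := by
    rw [hD m le_rfl, Nat.sub_self]
  have h1 : ∀ t ∈ Finset.range m, q ^ t *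
      (blockSumSq k m x (m - (t + 1)) - blockSumSq k m x (m - t))
      = q ^ t * ((∑ i : Fin (k ^ m), ∑ j : Fin (k ^ m), d (t + 1) i j)
          - (∑ i : Fin (k ^ m), ∑ j : Fin (k ^ m), d t i j)) := by
    intro t ht
    rw [Finset.mem_range] at ht
    have e1 : m - (m - (t + 1)) = t + 1 := by omega
    have e2 : m - (m - t) = t := by omega
    rw [hD (m - (t + 1)) (by omega), hD (m - t) (by omega), e1, e2]
  rw [h0, Finset.sum_congr rfl h1]
  -- swap sums
  have hswap : ∑ t ∈ Finset.range m, q ^ t *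
      ((∑ i : Fin (k ^ m), ∑ j : Fin (k ^ m), d (t + 1) i j)
        - (∑ i : Fin (k ^ m), ∑ j : Fin (k ^ m), d t i j))
      = ∑ i : Fin (k ^ m), ∑ j : Fin (k ^ m),
          ∑ t ∈ Finset.range m, q ^ t * (d (t + 1) i j - d t i j) := by
    simp_rw [← Finset.sum_sub_distrib, Finset.mul_sum]
    rw [Finset.sum_comm]
    exact Finset.sum_congr rfl fun i _ => Finset.sum_comm
  rw [hswap]
  -- reduce to a per-pair identity
  rw [dotProduct, Finset.mul_sum]
  simp_rw [Matrix.mulVec, dotProduct, Finset.mul_sum, ← Finset.sum_add_distrib]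
  rw [Finset.mul_sum]
  refine Finset.sum_congr rfl fun i _ => ?_
  rw [Finset.mul_sum]
  refine Finset.sum_congr rfl fun j _ => ?_
  by_cases hij : (i : ℕ) = (j : ℕ)
  · have hij' : i = j := Fin.ext hij
    subst hij'
    have hdiag : ∀ u, d u i i = x i * x i := fun u => if_pos rfl
    have hC : treeCov k m ρ σ i i = σ ^ 2 := by simp [treeCov]
    rw [hC, hdiag, Finset.sum_eq_zero fun t (_ : t ∈ Finset.range m) => by
      rw [hdiag, hdiag]; ring]
    ring
  · obtain ⟨hL1, hLm, hkey⟩ := lcaHeight_key hm i.2 j.2 hij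
    set L := lcaHeight k (i : ℕ) (j : ℕ) with hLdef
    have hdval : ∀ u, d u i j = if L ≤ u then x i * x j else 0 := by
      intro u
      simp only [hd]
      by_cases h : L ≤ u
      · rw [if_pos ((hkey u).2 h), if_pos h]
      · rw [if_neg (fun hc => h ((hkey u).1 hc)), if_neg h]
    have hd0 : d 0 i j = 0 := by rw [hdval 0, if_neg (by omega)]
    have hsum : ∑ t ∈ Finset.range m, ρ * (q ^ t * (d (t + 1) i j - d t i j))
        = ρ * (q ^ (L - 1) * (x i * x j)) := by
      rw [Finset.sum_eq_single_of_mem (L - 1) (Finset.mem_range.2 (by omega))]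
      · rw [hdval, hdval, if_pos (by omega), if_neg (by omega)]
        ring_nf
      · intro t _ htL
        rw [hdval, hdval]
        rcases lt_or_ge t (L - 1) with h | h
        · rw [if_neg (by omega), if_neg (by omega)]; ring
        · rw [if_pos (by omega), if_pos (by omega)]; ring
    rw [hd0, hsum]
    simp only [treeCov, Matrix.of_apply, if_neg hij]
    rw [← hqdef, ← hLdef]
    ring

lemma blockSumSq_nonneg (k m : ℕ) (x : Fin (k ^ m) → ℝ) (p : ℕ) : 0 ≤ blockSumSq k m x p := by
  unfold blockSumSq; positivity

lemma blockSumSq_eq (k m p : ℕ) (hp : p ≤ m) (x : Fin (k ^ m) → ℝ) :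
    blockSumSq k m x p
      = ∑ i : Fin (k ^ m), ∑ j : Fin (k ^ m), (if (i : ℕ) / k ^ (m - p) = (j : ℕ) / k ^ (m - p) then x i * x j else 0) := by
  have hd : ∀ i : Fin (k ^ m), (i : ℕ) / k ^ (m - p) < k ^ p := fun i => by
    apply Nat.div_lt_of_lt_mul
    calc (i : ℕ) < k ^ m := i.2
      _ = k ^ (m - p) * k ^ p := by rw [← pow_add, Nat.sub_add_cancel hp]
  have key : ∀ r, (∑ i ∈ Finset.univ.filter (fun i : Fin (k ^ m) => (i : ℕ) / k ^ (m - p) = r), x i) ^ 2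
      = ∑ i : Fin (k ^ m), ∑ j : Fin (k ^ m), (if ((i : ℕ) / k ^ (m - p) = r ∧ (j : ℕ) / k ^ (m - p) = r) then x i * x j else 0) := by
    intro r
    rw [sq, Finset.sum_mul_sum, Finset.sum_filter]
    refine Finset.sum_congr rfl fun i _ => ?_
    rw [Finset.sum_filter]
    by_cases h : (i : ℕ) / k ^ (m - p) = r <;> simp [h]
  unfold blockSumSq
  simp_rw [key]
  rw [Finset.sum_comm]
  refine Finset.sum_congr rfl fun i _ => ?_
  rw [Finset.sum_comm]
  refine Finset.sum_congr rfl fun j _ => ?_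
  by_cases h : (i : ℕ) / k ^ (m - p) = (j : ℕ) / k ^ (m - p)
  · rw [if_pos h]
    rw [Finset.sum_eq_single_of_mem ((i : ℕ) / k ^ (m - p)) (Finset.mem_range.2 (hd i))]
    · simp [h.symm]
    · intro r _ hr
      rw [if_neg]
      rintro ⟨h1, -⟩
      exact hr h1.symm
  · rw [if_neg h]
    refine Finset.sum_eq_zero fun r _ => ?_
    rw [if_neg]
    rintro ⟨h1, h2⟩
    exact h (h1.trans h2.symm)

lemma blockSumSq_le (k m p : ℕ) (hk : 1 ≤ k) (hpm : p < m) (x : Fin (k ^ m) → ℝ) :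
    blockSumSq k m x p ≤ (k : ℝ) * blockSumSq k m x (p + 1) := by
  have hk0 : 0 < k := hk
  set e := m - (p + 1) with he
  have hme : m - p = e + 1 := by omega
  -- fiber of r' over r
  set fib : ℕ → Finset ℕ := fun r => (Finset.range (k ^ (p+1))).filter (fun r' => r' / k = r) with hfib
  have hdlt : ∀ i : Fin (k ^ m), (i : ℕ) / k ^ e < k ^ (p + 1) := fun i => by
    apply Nat.div_lt_of_lt_mul
    calc (i : ℕ) < k ^ m := i.2
      _ = k ^ e * k ^ (p+1) := by rw [← pow_add]; congr 1; omega
  -- block sum at level p is the sum of the child block sums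
  have hsplit : ∀ r, (∑ i ∈ Finset.univ.filter (fun i : Fin (k ^ m) => (i : ℕ) / k ^ (m - p) = r), x i)
      = ∑ r' ∈ fib r, (∑ i ∈ Finset.univ.filter (fun i : Fin (k ^ m) => (i : ℕ) / k ^ e = r'), x i) := by
    intro r
    have hmaps : ∀ i ∈ Finset.univ.filter (fun i : Fin (k ^ m) => (i : ℕ) / k ^ (m - p) = r),
        (i : ℕ) / k ^ e ∈ fib r := by
      intro i hi
      rw [Finset.mem_filter] at hi
      rw [hfib, Finset.mem_filter, Finset.mem_range]
      refine ⟨hdlt i, ?_⟩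
      have h2 := hi.2
      rw [hme, pow_succ, ← Nat.div_div_eq_div_mul] at h2
      exact h2
    rw [← Finset.sum_fiberwise_of_maps_to hmaps x]
    refine Finset.sum_congr rfl fun r' hr' => ?_
    refine Finset.sum_congr ?_ fun _ _ => rfl
    ext i
    simp only [Finset.mem_filter, Finset.mem_univ, true_and]
    constructor
    · rintro ⟨h1, h2⟩; exact h2
    · intro h2
      refine ⟨?_, h2⟩
      rw [hfib, Finset.mem_filter] at hr'
      rw [hme, pow_succ, ← Nat.div_div_eq_div_mul, h2]
      exact hr'.2
  have hcard : ∀ r, (fib r).card ≤ k := by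
    intro r
    have : fib r ⊆ Finset.Ico (r * k) (r * k + k) := by
      intro r' hr'
      rw [hfib, Finset.mem_filter] at hr'
      rw [Finset.mem_Ico]
      have h1 := Nat.div_add_mod r' k
      have h2 := Nat.mod_lt r' hk0
      rw [hr'.2] at h1
      constructor
      · calc r * k = k * r := mul_comm r k
          _ ≤ r' := h1 ▸ Nat.le_add_right _ _
      · have : r' = k * r + r' % k := h1.symm
        calc r' = k * r + r' % k := h1.symm
          _ < r * k + k := by rw [mul_comm]; exact Nat.add_lt_add_left h2 _
    calc (fib r).card ≤ (Finset.Ico (r * k) (r * k + k)).card := Finset.card_le_card this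
      _ = k := by rw [Nat.card_Ico]; omega
  have hfibw : ∀ r' ∈ Finset.range (k ^ (p+1)), r' / k ∈ Finset.range (k ^ p) := by
    intro r' hr'
    rw [Finset.mem_range] at *
    apply Nat.div_lt_of_lt_mul
    calc r' < k ^ (p+1) := hr'
      _ = k * k ^ p := by rw [pow_succ, mul_comm]
  calc blockSumSq k m x p
      = ∑ r ∈ Finset.range (k ^ p),
          (∑ r' ∈ fib r, (∑ i ∈ Finset.univ.filter
            (fun i : Fin (k ^ m) => (i : ℕ) / k ^ e = r'), x i)) ^ 2 := by
        unfold blockSumSq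
        exact Finset.sum_congr rfl fun r _ => by rw [hsplit r]
    _ ≤ ∑ r ∈ Finset.range (k ^ p), (k : ℝ) *
          ∑ r' ∈ fib r, (∑ i ∈ Finset.univ.filter
            (fun i : Fin (k ^ m) => (i : ℕ) / k ^ e = r'), x i) ^ 2 := by
        refine Finset.sum_le_sum fun r _ => ?_
        refine le_trans sq_sum_le_card_mul_sum_sq ?_
        refine mul_le_mul_of_nonneg_right ?_ (by positivity)
        exact_mod_cast hcard r
    _ = (k : ℝ) * blockSumSq k m x (p + 1) := by
        rw [← Finset.mul_sum]
        congr 1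
        unfold blockSumSq
        have : m - (p + 1) = e := rfl
        rw [this]
        exact Finset.sum_fiberwise_of_maps_to hfibw _

lemma telescope_ineq (K q ρ : ℝ) (hK : 1 ≤ K) (hq0 : 0 ≤ q) (hq : q = ρ + (1 - ρ) / K)
    (hρ : ρ ≤ 1) (a : ℕ → ℝ) (ha0 : ∀ n, 0 ≤ a n) (haK : ∀ n, a (n + 1) ≤ K * a n) (m : ℕ) :
    q ^ m * a m ≤ a 0 + ρ * ∑ t ∈ Finset.range m, q ^ t * (a (t + 1) - a t) := by
  induction m with
  | zero => simp
  | succ n ih =>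
    rw [Finset.sum_range_succ]
    have hK0 : (0 : ℝ) < K := lt_of_lt_of_le one_pos hK
    have h1 : q * a (n + 1) ≤ (1 - ρ) * a n + ρ * a (n + 1) := by
      have hd : (1 - ρ) / K * a (n + 1) ≤ (1 - ρ) * a n := by
        rw [div_mul_eq_mul_div, div_le_iff₀ hK0]
        nlinarith [haK n, ha0 (n + 1)]
      rw [hq]; nlinarith
    calc q ^ (n + 1) * a (n + 1) = q ^ n * (q * a (n + 1)) := by ring
      _ ≤ q ^ n * ((1 - ρ) * a n + ρ * a (n + 1)) :=
          mul_le_mul_of_nonneg_left h1 (pow_nonneg hq0 n)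
      _ = q ^ n * a n + ρ * (q ^ n * (a (n + 1) - a n)) := by ring
      _ ≤ (a 0 + ρ * ∑ t ∈ Finset.range n, q ^ t * (a (t + 1) - a t))
            + ρ * (q ^ n * (a (n + 1) - a n)) := by linarith
      _ = a 0 + ρ * (∑ t ∈ Finset.range n, q ^ t * (a (t + 1) - a t)
            + q ^ n * (a (n + 1) - a n)) := by ring

lemma lcaHeight_comm (k i j : ℕ) : lcaHeight k i j = lcaHeight k j i := by
  unfold lcaHeight
  congr 1
  ext l
  exact ⟨fun h => ⟨h.1, h.2.symm⟩, fun h => ⟨h.1, h.2.symm⟩⟩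

def treeBlock (k m p r : ℕ) : Finset (Fin (k ^ m)) :=
  Finset.univ.filter fun i => (i : ℕ) / k ^ (m - p) = r

theorem treeCov_posSemidef (k m : ℕ) (hk : 2 ≤ k) (hm : 1 ≤ m) (σ ρ : ℝ) (hσ : 0 < σ)
    (hρ_lb : -(1 / ((k : ℝ) - 1)) < ρ) (hρ_ub : ρ < 1) :
    (treeCov k m ρ σ).PosSemidef := by
  have hK2 : (2 : ℝ) ≤ (k : ℝ) := by exact_mod_cast hk
  have hK0 : (0 : ℝ) < (k : ℝ) := by linarith
  rw [Matrix.posSemidef_iff_dotProduct_mulVec]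
  constructor
  · -- Hermitian
    ext i j
    simp only [Matrix.conjTranspose_apply, treeCov, Matrix.of_apply, star_trivial]
    by_cases h : (i : ℕ) = (j : ℕ)
    · simp only [if_pos h, if_pos h.symm]
    · have h' : ¬ (j : ℕ) = (i : ℕ) := fun hc => h hc.symm
      simp only [if_neg h, if_neg h', lcaHeight_comm]
  · intro x
    rw [show star x = x from funext fun i => star_trivial (x i)]
    rw [treeCov_quadform k m hk hm σ ρ x (fun p hp => blockSumSq_eq k m p hp x)]
    set q : ℝ := 1 / (k : ℝ) + (1 - 1 / (k : ℝ)) * ρ with hqdef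
    have h1 : (0 : ℝ) < (k : ℝ) - 1 := by linarith
    have hq1 : q = (1 + ((k : ℝ) - 1) * ρ) / (k : ℝ) := by
      rw [hqdef]; field_simp; try ring
    have h2 : -(1 : ℝ) < ((k : ℝ) - 1) * ρ := by
      have h3 := mul_lt_mul_of_pos_left hρ_lb h1
      have e1 : ((k : ℝ) - 1) * (1 / ((k : ℝ) - 1)) = 1 := mul_one_div_cancel (ne_of_gt h1)
      nlinarith
    have hq0 : 0 ≤ q := by
      rw [hq1]
      apply div_nonneg (by linarith) (le_of_lt hK0)
    have hqrel : q = ρ + (1 - ρ) / (k : ℝ) := by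
      rw [hqdef]; field_simp; try ring
    set a : ℕ → ℝ := fun t => blockSumSq k m x (m - t) with hadef
    have ha0 : ∀ n, 0 ≤ a n := fun n => blockSumSq_nonneg k m x (m - n)
    have haK : ∀ n, a (n + 1) ≤ (k : ℝ) * a n := by
      intro n
      by_cases hn : n < m
      · have h := blockSumSq_le k m (m - (n + 1)) (by omega) (by omega) x
        have e : m - (n + 1) + 1 = m - n := by omega
        rw [e] at h
        exact h
      · have e : m - (n + 1) = m - n := by omega
        simp only [hadef, e]
        nlinarith [blockSumSq_nonneg k m x (m - n)]
    have hfin := telescope_ineq (k : ℝ) q ρ (by linarith) hq0 hqrel (le_of_lt hρ_ub)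
      a ha0 haK m
    simp only [hadef, Nat.sub_zero] at hfin
    refine mul_nonneg (sq_nonneg σ) ?_
    exact le_trans (mul_nonneg (pow_nonneg hq0 m) (blockSumSq_nonneg k m x (m - m))) hfin
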